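/- arXiv:2203.11634 — 4 statements merged into one kernel-verified Lean document; each statement's English description precedes it below -/
import Mathlib

section
/- Let (F_low, F_up) be a p-box on Ω = {x_1 < ... < x_n} and h : Ω → ℝ any function. Then there exists F in the credal set M(F_low, F_up) minimizing P_F(h) over M(F_low, F_up) such that for every i, F(x_i) ∈ {F_low(x_i), F_up(x_i), F(x_{i−1}), F(x_{i+1})} (with conventions F(x_0) = 0 and omitting F(x_{n+1})). -/
/-- A distribution function on `Ω = {x_1 < ... < x_{n+1}}`, modelled as `Fin (n+1)`. -/
def IsDistFun (n : ℕ) (F : Fin (n + 1) → ℝ) : Prop :=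
  Monotone F ∧ (∀ i, F i ∈ Set.Icc (0 : ℝ) 1) ∧ F (Fin.last n) = 1

/-- The value of `F` at the predecessor, with the convention `F(x_0) = 0`. -/
def prevVal (n : ℕ) (F : Fin (n + 1) → ℝ) (i : Fin (n + 1)) : ℝ :=
  if h : (i : ℕ) = 0 then 0
  else F ⟨(i : ℕ) - 1, Nat.lt_of_le_of_lt (Nat.sub_le _ _) i.isLt⟩

/-- The expectation of `h` with respect to the distribution function `F`:
`P_F(h) = ∑ i, h(x_i) (F(x_i) - F(x_{i-1}))`. -/
def PF (n : ℕ) (F h : Fin (n + 1) → ℝ) : ℝ := ∑ i, h i * (F i - prevVal n F i)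

/-- The credal set of the p-box `(Flow, Fup)`. -/
def credal (n : ℕ) (Flow Fup : Fin (n + 1) → ℝ) : Set (Fin (n + 1) → ℝ) :=
  {F | IsDistFun n F ∧ Flow ≤ F ∧ F ≤ Fup}

lemma prevVal_update_of_ne (n : ℕ) (F : Fin (n + 1) → ℝ) (i k : Fin (n + 1)) (v : ℝ)
    (hk : (k : ℕ) ≠ (i : ℕ) + 1) :
    prevVal n (Function.update F i v) k = prevVal n F k := by
  unfold prevVal
  split_ifs with h0
  · rfl
  · apply Function.update_of_ne
    intro he
    apply hk
    have := congrArg Fin.val he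
    simp at this
    omega

lemma prevVal_update_succ (n : ℕ) (F : Fin (n + 1) → ℝ) (i k : Fin (n + 1)) (v : ℝ)
    (hk : (k : ℕ) = (i : ℕ) + 1) :
    prevVal n (Function.update F i v) k = v := by
  unfold prevVal
  split_ifs with h0
  · omega
  · have : (⟨(k : ℕ) - 1, Nat.lt_of_le_of_lt (Nat.sub_le _ _) k.isLt⟩ : Fin (n + 1)) = i := by
      apply Fin.ext; simp; omega
    rw [this, Function.update_self]

lemma prevVal_succ (n : ℕ) (F : Fin (n + 1) → ℝ) (i k : Fin (n + 1)) (hk : (k : ℕ) = (i : ℕ) + 1) :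
    prevVal n F k = F i := by
  unfold prevVal
  split_ifs with h0
  · omega
  · congr 1; apply Fin.ext; simp; omega

lemma prevVal_nonneg (n : ℕ) (F : Fin (n + 1) → ℝ) (hF : ∀ k, 0 ≤ F k) (i : Fin (n + 1)) :
    0 ≤ prevVal n F i := by
  unfold prevVal
  split_ifs
  · exact le_refl 0
  · exact hF _

lemma prevVal_le_self (n : ℕ) (F : Fin (n + 1) → ℝ) (hF : Monotone F) (i : Fin (n + 1))
    (h0 : 0 ≤ F i) : prevVal n F i ≤ F i := by
  unfold prevVal
  split_ifs
  · exact h0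
  · exact hF (by simp [Fin.le_def])

lemma PF_update (n : ℕ) (F h : Fin (n + 1) → ℝ) (i j : Fin (n + 1))
    (hj : (j : ℕ) = (i : ℕ) + 1) (v : ℝ) :
    PF n (Function.update F i v) h = PF n F h + (v - F i) * (h i - h j) := by
  have hij : i ≠ j := by intro he; apply_fun Fin.val at he; omega
  have key : PF n (Function.update F i v) h - PF n F h = (v - F i) * (h i - h j) := by
    unfold PF
    rw [← Finset.sum_sub_distrib]
    rw [← Finset.sum_subset (Finset.subset_univ {i, j})]
    · rw [Finset.sum_pair hij]
      rw [prevVal_update_of_ne n F i i v (by omega), prevVal_update_succ n F i j v hj,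
        prevVal_succ n F i j hj, Function.update_self, Function.update_of_ne hij.symm]
      ring
    · intro k _ hk
      simp only [Finset.mem_insert, Finset.mem_singleton, not_or] at hk
      rw [prevVal_update_of_ne n F i k v (by
        intro he; exact hk.2 (Fin.ext (by omega))),
        Function.update_of_ne hk.1]
      ring
  linarith

lemma monotone_update (n : ℕ) (F : Fin (n + 1) → ℝ) (hF : Monotone F) (i j : Fin (n + 1))
    (hj : (j : ℕ) = (i : ℕ) + 1) (v : ℝ) (h1 : prevVal n F i ≤ v) (h2 : v ≤ F j) :
    Monotone (Function.update F i v) := by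
  intro k l hkl
  rw [Fin.le_def] at hkl
  by_cases hk : k = i <;> by_cases hl : l = i
  · subst hk; subst hl; exact le_refl _
  · subst hk
    rw [Function.update_self, Function.update_of_ne hl]
    have hjl : j ≤ l := by
      rw [Fin.le_def]
      have : (l : ℕ) ≠ (k : ℕ) := fun he => hl (Fin.ext he)
      omega
    exact le_trans h2 (hF hjl)
  · subst hl
    rw [Function.update_of_ne hk, Function.update_self]
    refine le_trans ?_ h1
    have hk' : (k : ℕ) < (l : ℕ) := by
      have : (k : ℕ) ≠ (l : ℕ) := fun he => hk (Fin.ext he)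
      omega
    unfold prevVal
    rw [dif_neg (by omega)]
    exact hF (by rw [Fin.le_def]; simp; omega)
  · rw [Function.update_of_ne hk, Function.update_of_ne hl]
    exact hF (by rw [Fin.le_def]; exact hkl)

lemma update_mem_credal (n : ℕ) (Flow Fup : Fin (n + 1) → ℝ) (F : Fin (n + 1) → ℝ)
    (hF : F ∈ credal n Flow Fup) (i j : Fin (n + 1)) (hj : (j : ℕ) = (i : ℕ) + 1) (v : ℝ)
    (hv1 : prevVal n F i ≤ v) (hv2 : v ≤ F j) (hv3 : Flow i ≤ v) (hv4 : v ≤ Fup i) :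
    Function.update F i v ∈ credal n Flow Fup := by
  obtain ⟨⟨hmono, hIcc, hlast⟩, hFl, hFu⟩ := hF
  refine ⟨⟨monotone_update n F hmono i j hj v hv1 hv2, ?_, ?_⟩, ?_, ?_⟩
  · intro k
    by_cases hk : k = i
    · subst hk; rw [Function.update_self]
      exact ⟨le_trans (prevVal_nonneg n F (fun m => (hIcc m).1) k) hv1,
        le_trans hv2 (hIcc j).2⟩
    · rw [Function.update_of_ne hk]; exact hIcc k
  · rw [Function.update_of_ne ?_]
    · exact hlast
    · intro he
      have := congrArg Fin.val he
      have hjl := j.isLt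
      simp [Fin.last] at this
      omega
  · intro k
    by_cases hk : k = i
    · subst hk; rw [Function.update_self]; exact hv3
    · rw [Function.update_of_ne hk]; exact hFl k
  · intro k
    by_cases hk : k = i
    · subst hk; rw [Function.update_self]; exact hv4
    · rw [Function.update_of_ne hk]; exact hFu k

lemma sum_update (n : ℕ) (F : Fin (n + 1) → ℝ) (i : Fin (n + 1)) (v : ℝ) :
    ∑ k, Function.update F i v k = (∑ k, F k) + (v - F i) := by
  have : ∑ k, Function.update F i v k - ∑ k, F k = v - F i := by
    rw [← Finset.sum_sub_distrib, Finset.sum_eq_single i]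
    · rw [Function.update_self]
    · intro k _ hk; rw [Function.update_of_ne hk]; ring
    · intro hi'; exact absurd (Finset.mem_univ i) hi'
  linarith

/-- For any `h` there exists a minimizer `F` of `P_F(h)` over the credal set of a
p-box such that at every point, `F(x_i)` is one of `Flow(x_i)`, `Fup(x_i)`,
`F(x_{i-1})` (with `F(x_0) = 0`), or `F(x_{i+1})` (omitted for the last index). -/
theorem exists_minimizer_with_special_values (n : ℕ) (Flow Fup : Fin (n + 1) → ℝ)
    (hlow : IsDistFun n Flow) (hup : IsDistFun n Fup) (hbox : Flow ≤ Fup)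
    (h : Fin (n + 1) → ℝ) :
    ∃ F ∈ credal n Flow Fup,
      (∀ G ∈ credal n Flow Fup, PF n F h ≤ PF n G h) ∧
      ∀ i : Fin (n + 1), F i = Flow i ∨ F i = Fup i ∨ F i = prevVal n F i ∨
        ∃ hi : (i : ℕ) + 1 < n + 1, F i = F ⟨(i : ℕ) + 1, hi⟩ := by

  set K := credal n Flow Fup with hKdef
  have hPFcont : Continuous (fun F => PF n F h) := by
    unfold PF
    apply continuous_finset_sum
    intro i _
    apply Continuous.mul continuous_const
    apply Continuous.sub (continuous_apply i)
    unfold prevVal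
    split_ifs
    · exact continuous_const
    · exact continuous_apply _
  have hKclosed : IsClosed K := by
    have hKeq : K = {F : Fin (n+1) → ℝ | Monotone F} ∩ {F | ∀ i, F i ∈ Set.Icc (0:ℝ) 1}
        ∩ {F | F (Fin.last n) = 1} ∩ {F | Flow ≤ F} ∩ {F | F ≤ Fup} := by
      ext F
      simp only [hKdef, credal, IsDistFun, Set.mem_setOf_eq, Set.mem_inter_iff]
      tauto
    rw [hKeq]
    refine IsClosed.inter (IsClosed.inter (IsClosed.inter (IsClosed.inter ?_ ?_) ?_) ?_) ?_
    · have : {F : Fin (n+1) → ℝ | Monotone F} =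
          ⋂ (p : Fin (n+1) × Fin (n+1)) (_ : p.1 ≤ p.2), {F | F p.1 ≤ F p.2} := by
        ext F
        simp only [Set.mem_setOf_eq, Set.mem_iInter, Monotone, Prod.forall]
      rw [this]
      exact isClosed_iInter fun p => isClosed_iInter fun _ =>
        isClosed_le (continuous_apply _) (continuous_apply _)
    · have : {F : Fin (n+1) → ℝ | ∀ i, F i ∈ Set.Icc (0:ℝ) 1} =
          ⋂ i, {F | F i ∈ Set.Icc (0:ℝ) 1} := by
        ext F; simp [Set.mem_iInter]
      rw [this]
      exact isClosed_iInter fun i => isClosed_Icc.preimage (continuous_apply i)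
    · exact isClosed_eq (continuous_apply _) continuous_const
    · have : {F : Fin (n+1) → ℝ | Flow ≤ F} = ⋂ i, {F | Flow i ≤ F i} := by
        ext F; simp [Set.mem_iInter, Pi.le_def]
      rw [this]
      exact isClosed_iInter fun i => isClosed_le continuous_const (continuous_apply i)
    · have : {F : Fin (n+1) → ℝ | F ≤ Fup} = ⋂ i, {F | F i ≤ Fup i} := by
        ext F; simp [Set.mem_iInter, Pi.le_def]
      rw [this]
      exact isClosed_iInter fun i => isClosed_le (continuous_apply i) continuous_const
  have hKsub : K ⊆ Set.pi Set.univ (fun _ => Set.Icc (0:ℝ) 1) := by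
    intro F hF i _
    exact hF.1.2.1 i
  have hKcpt : IsCompact K :=
    IsCompact.of_isClosed_subset (isCompact_univ_pi fun _ => isCompact_Icc) hKclosed hKsub
  have hKne : K.Nonempty := ⟨Fup, hup, hbox, le_refl _⟩
  obtain ⟨F0, hF0, hmin0⟩ := hKcpt.exists_isMinOn hKne hPFcont.continuousOn
  set S := {F | F ∈ K ∧ PF n F h = PF n F0 h} with hSdef
  have hSsub : S ⊆ K := fun F hF => hF.1
  have hScpt : IsCompact S :=
    IsCompact.of_isClosed_subset hKcpt (hKclosed.inter (isClosed_eq hPFcont continuous_const))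
      hSsub
  have hSne : S.Nonempty := ⟨F0, hF0, rfl⟩
  have hsumcont : Continuous (fun F : Fin (n+1) → ℝ => ∑ i, F i) :=
    continuous_finset_sum _ fun i _ => continuous_apply i
  obtain ⟨F, hFS, hminS⟩ := hScpt.exists_isMinOn hSne hsumcont.continuousOn
  obtain ⟨hFK, hFval⟩ := hFS
  refine ⟨F, hFK, ?_, ?_⟩
  · intro G hG
    calc PF n F h = PF n F0 h := hFval
    _ ≤ PF n G h := hmin0 hG
  · intro i
    obtain ⟨⟨hmono, hIcc, hlast⟩, hFl, hFu⟩ := hFK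
    by_cases hlast_i : (i : ℕ) = n
    · right; left
      have hie : i = Fin.last n := Fin.ext (by simp [Fin.last, hlast_i])
      rw [hie, hlast, hup.2.2]
    · by_contra hcon
      push_neg at hcon
      obtain ⟨h1, h2, h3, h4⟩ := hcon
      have hilt := i.isLt
      have hi : (i : ℕ) + 1 < n + 1 := by omega
      set j : Fin (n + 1) := ⟨(i : ℕ) + 1, hi⟩ with hjdef
      have hj : (j : ℕ) = (i : ℕ) + 1 := rfl
      have h4' : F i ≠ F j := h4 hi
      have hFi0 : 0 ≤ F i := (hIcc i).1
      have hlt1 : Flow i < F i := lt_of_le_of_ne (hFl i) (Ne.symm h1)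
      have hlt2 : F i < Fup i := lt_of_le_of_ne (hFu i) h2
      have hlt3 : prevVal n F i < F i :=
        lt_of_le_of_ne (prevVal_le_self n F hmono i hFi0) (fun he => h3 he.symm)
      have hlt4 : F i < F j := lt_of_le_of_ne (hmono (by rw [Fin.le_def, hj]; omega)) h4'
      have hFmin : PF n F h ≤ PF n F0 h := le_of_eq hFval
      -- perturbation down
      set δ₁ := min (F i - Flow i) (F i - prevVal n F i) with hd1
      have hδ₁ : 0 < δ₁ := lt_min (by linarith) (by linarith)
      set v₁ := F i - δ₁ with hv1def
      have hG₁K : Function.update F i v₁ ∈ K := by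
        apply update_mem_credal n Flow Fup F ⟨⟨hmono, hIcc, hlast⟩, hFl, hFu⟩ i j hj
        · have := min_le_right (F i - Flow i) (F i - prevVal n F i); rw [hv1def]; linarith
        · rw [hv1def]; linarith
        · have := min_le_left (F i - Flow i) (F i - prevVal n F i); rw [hv1def]; linarith
        · rw [hv1def]; linarith
      have e1 : PF n (Function.update F i v₁) h = PF n F h + (v₁ - F i) * (h i - h j) :=
        PF_update n F h i j hj v₁
      have i1 : PF n F h ≤ PF n (Function.update F i v₁) h :=
        le_trans hFmin (hmin0 hG₁K)
      -- perturbation up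
      set δ₂ := min (Fup i - F i) (F j - F i) with hd2
      have hδ₂ : 0 < δ₂ := lt_min (by linarith) (by linarith)
      set v₂ := F i + δ₂ with hv2def
      have hG₂K : Function.update F i v₂ ∈ K := by
        apply update_mem_credal n Flow Fup F ⟨⟨hmono, hIcc, hlast⟩, hFl, hFu⟩ i j hj
        · rw [hv2def]; linarith
        · have := min_le_right (Fup i - F i) (F j - F i); rw [hv2def]; linarith
        · rw [hv2def]; linarith
        · have := min_le_left (Fup i - F i) (F j - F i); rw [hv2def]; linarith
      have e2 : PF n (Function.update F i v₂) h = PF n F h + (v₂ - F i) * (h i - h j) :=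
        PF_update n F h i j hj v₂
      have i2 : PF n F h ≤ PF n (Function.update F i v₂) h :=
        le_trans hFmin (hmin0 hG₂K)
      -- conclude h i = h j
      have hle : h i ≤ h j := by nlinarith
      have hge : h j ≤ h i := by nlinarith
      have hhij : h i = h j := le_antisymm hle hge
      -- G₁ is also a minimizer, with strictly smaller sum
      have hG₁S : Function.update F i v₁ ∈ S := by
        refine ⟨hG₁K, ?_⟩
        rw [e1, hhij]
        simpa using hFval
      have hsumle : (∑ k, F k) ≤ ∑ k, Function.update F i v₁ k := hminS hG₁S
      rw [sum_update] at hsumle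
      rw [hv1def] at hsumle
      linarith
end

section
/- Every extreme point F of the credal set M(F_low, F_up) of a p-box on Ω = {x_1 < ... < x_n} satisfies, for every i, F(x_i) ∈ {F_low(x_j) : j ≥ i} ∪ {F_up(x_k) : k ≤ i}. -/
/-- Every extreme point `F` of the credal set of a p-box satisfies, for every `i`,
`F(x_i) ∈ {Flow(x_j) : j ≥ i} ∪ {Fup(x_k) : k ≤ i}`. -/
theorem extreme_point_values (n : ℕ) (Flow Fup : Fin (n + 1) → ℝ)
    (hlow : IsDistFun n Flow) (hup : IsDistFun n Fup) (hbox : Flow ≤ Fup)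
    (F : Fin (n + 1) → ℝ)
    (hF : F ∈ Set.extremePoints ℝ (credal n Flow Fup)) :
    ∀ i : Fin (n + 1),
      (∃ j : Fin (n + 1), i ≤ j ∧ F i = Flow j) ∨
      (∃ k : Fin (n + 1), k ≤ i ∧ F i = Fup k) := by
  intro i
  by_contra hcon
  push_neg at hcon
  obtain ⟨h1, h2⟩ := hcon
  obtain ⟨⟨hFmono, hF01, hFlast⟩, hlF, hFu⟩ := hF.1
  set c : ℝ := F i with hc
  -- Flow is strictly below c on the level set
  have hlo : ∀ j, F j = c → Flow j < c := by
    intro j hj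
    rcases le_total j i with h | h
    · have h1' : Flow i < c := lt_of_le_of_ne (hlF i) (fun he => h1 i le_rfl he.symm)
      exact lt_of_le_of_lt (hlow.1 h) h1'
    · exact lt_of_le_of_ne (hj ▸ hlF j) (fun he => h1 j h he.symm)
  have hhi : ∀ j, F j = c → c < Fup j := by
    intro j hj
    rcases le_total j i with h | h
    · exact lt_of_le_of_ne (hj ▸ hFu j) (h2 j h)
    · have h2' : c < Fup i := lt_of_le_of_ne (hFu i) (h2 i le_rfl)
      exact lt_of_lt_of_le h2' (hup.1 h)
  -- the perturbation size
  set g : Fin (n + 1) → ℝ := fun j => if F j = c then min (Fup j - c) (c - Flow j) else |F j - c|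
    with hg
  have hne : (Finset.univ : Finset (Fin (n + 1))).Nonempty := ⟨i, Finset.mem_univ i⟩
  set ε : ℝ := Finset.univ.inf' hne g with hε
  have hεpos : 0 < ε := by
    rw [hε, Finset.lt_inf'_iff]
    intro j _
    by_cases hj : F j = c
    · simp only [hg, hj, if_pos]
      exact lt_min (by linarith [hhi j hj]) (by linarith [hlo j hj])
    · simp only [hg, hj, if_neg, if_false]
      exact abs_pos.mpr (sub_ne_zero.mpr hj)
  have hεle : ∀ j, ε ≤ g j := fun j => Finset.inf'_le g (Finset.mem_univ j)
  have hA : ∀ j, F j = c → c + ε ≤ Fup j := by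
    intro j hj
    have := hεle j
    simp only [hg, hj, if_pos] at this
    have := le_trans this (min_le_left _ _)
    linarith
  have hB : ∀ j, F j = c → Flow j ≤ c - ε := by
    intro j hj
    have := hεle j
    simp only [hg, hj, if_pos] at this
    have := le_trans this (min_le_right _ _)
    linarith
  have hC : ∀ j, c < F j → c + ε ≤ F j := by
    intro j hj
    have h := hεle j
    simp only [hg, ne_of_gt hj, if_neg (ne_of_gt hj)] at h
    rw [abs_of_pos (by linarith)] at h
    linarith
  have hD : ∀ j, F j < c → F j ≤ c - ε := by
    intro j hj
    have h := hεle j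
    simp only [hg, if_neg (ne_of_lt hj)] at h
    rw [abs_of_neg (by linarith)] at h
    linarith
  -- the two perturbed functions
  set G : Fin (n + 1) → ℝ := fun j => F j + if F j = c then ε else 0 with hG
  set H : Fin (n + 1) → ℝ := fun j => F j - if F j = c then ε else 0 with hH
  have hlastne : F (Fin.last n) ≠ c := by
    intro h
    have h2' := hhi _ h
    rw [hup.2.2] at h2'
    rw [h] at hFlast
    linarith
  have hGcred : G ∈ credal n Flow Fup := by
    refine ⟨⟨?_, ?_, ?_⟩, ?_, ?_⟩
    · intro j k hjk
      simp only [hG]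
      by_cases hj : F j = c <;> by_cases hk : F k = c <;> simp [hj, hk]
      · have : c < F k := lt_of_le_of_ne (hj ▸ hFmono hjk) (Ne.symm hk)
        linarith [hC k this]
      · have : F j ≤ c := hk ▸ hFmono hjk
        linarith
      · exact hFmono hjk
    · intro j
      constructor
      · simp only [hG]
        have := (hF01 j).1
        by_cases hj : F j = c <;> simp [hj] <;> linarith
      · calc G j ≤ Fup j := ?_
             _ ≤ 1 := (hup.2.1 j).2
        simp only [hG]
        by_cases hj : F j = c
        · simp [hj]; linarith [hA j hj]
        · simp [hj]; exact hFu j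
    · simp only [hG]
      rw [if_neg hlastne, add_zero]
      exact hFlast
    · intro j
      simp only [hG]
      have := hlF j
      by_cases hj : F j = c <;> simp [hj] <;> linarith
    · intro j
      simp only [hG]
      by_cases hj : F j = c
      · simp [hj]; linarith [hA j hj]
      · simp [hj]; exact hFu j
  have hHcred : H ∈ credal n Flow Fup := by
    refine ⟨⟨?_, ?_, ?_⟩, ?_, ?_⟩
    · intro j k hjk
      simp only [hH]
      by_cases hj : F j = c <;> by_cases hk : F k = c <;> simp [hj, hk]
      · have : c ≤ F k := hj ▸ hFmono hjk
        linarith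
      · have : F j < c := lt_of_le_of_ne (hk ▸ hFmono hjk) hj
        linarith [hD j this]
      · exact hFmono hjk
    · intro j
      constructor
      · calc (0:ℝ) ≤ Flow j := (hlow.2.1 j).1
             _ ≤ H j := ?_
        simp only [hH]
        by_cases hj : F j = c
        · simp [hj]; linarith [hB j hj]
        · simp [hj]; exact hlF j
      · simp only [hH]
        have := (hF01 j).2
        by_cases hj : F j = c <;> simp [hj] <;> linarith
    · simp only [hH]
      rw [if_neg hlastne, sub_zero]
      exact hFlast
    · intro j
      simp only [hH]
      by_cases hj : F j = c
      · simp [hj]; linarith [hB j hj]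
      · simp [hj]; exact hlF j
    · intro j
      simp only [hH]
      have := hFu j
      by_cases hj : F j = c <;> simp [hj] <;> linarith
  have hseg : F ∈ openSegment ℝ G H := by
    refine ⟨1/2, 1/2, by norm_num, by norm_num, by norm_num, ?_⟩
    funext j
    simp only [Pi.add_apply, Pi.smul_apply, smul_eq_mul, hG, hH]
    ring
  have := hF.2 hGcred hHcred hseg
  have hGi : G i = c + ε := by simp [hG, ← hc]
  rw [this] at hGi
  simp only [← hc] at hGi
  linarith
end

section
/- Every extreme point F of the credal set of a p-box on Ω = {x_1 < ... < x_n} satisfies, for every i, F(x_i) ∈ {F_low(x_i), F_up(x_i), F(x_{i−1}), F(x_{i+1})} (with F(x_0) := 0, index i < n for the last option). -/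
/-- Every extreme point `F` of the credal set of a p-box satisfies, for every `i`,
`F(x_i) ∈ {Flow(x_i), Fup(x_i), F(x_{i-1}), F(x_{i+1})}` (with `F(x_0) := 0` and the
last option only available for `i < n`). -/
theorem extreme_point_local_values (n : ℕ) (Flow Fup : Fin (n + 1) → ℝ)
    (hlow : IsDistFun n Flow) (hup : IsDistFun n Fup) (hbox : Flow ≤ Fup)
    (F : Fin (n + 1) → ℝ)
    (hF : F ∈ Set.extremePoints ℝ (credal n Flow Fup)) :
    ∀ i : Fin (n + 1), F i = Flow i ∨ F i = Fup i ∨ F i = prevVal n F i ∨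
      ∃ hi : (i : ℕ) + 1 < n + 1, F i = F ⟨(i : ℕ) + 1, hi⟩ := by
  obtain ⟨⟨⟨hFmono, hFbd, hFlast⟩, hlowF, hFup⟩, hext⟩ := hF
  intro i
  by_cases hin : (i : ℕ) + 1 < n + 1
  · -- interior case
    by_contra hcon
    push_neg at hcon
    obtain ⟨h1, h2, h3, h4⟩ := hcon
    have h4' : F i ≠ F ⟨(i : ℕ) + 1, hin⟩ := h4 hin
    set s : Fin (n + 1) := ⟨(i : ℕ) + 1, hin⟩ with hs
    have hlt1 : Flow i < F i := lt_of_le_of_ne (hlowF i) (Ne.symm h1)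
    have hlt2 : F i < Fup i := lt_of_le_of_ne (hFup i) h2
    have hprevle : prevVal n F i ≤ F i := by
      unfold prevVal
      split
      · exact (hFbd i).1
      · exact hFmono (by simp only [Fin.le_def]; omega)
    have hlt3 : prevVal n F i < F i := lt_of_le_of_ne hprevle (Ne.symm h3)
    have hlt4 : F i < F s := lt_of_le_of_ne (hFmono (by simp [hs, Fin.le_def])) h4'
    set ε : ℝ := min (min (F i - Flow i) (Fup i - F i))
        (min (F i - prevVal n F i) (F s - F i)) with hε
    have hεpos : 0 < ε := by
      apply lt_min <;> apply lt_min <;> linarith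
    have hε1 : ε ≤ F i - Flow i := le_trans (min_le_left _ _) (min_le_left _ _)
    have hε2 : ε ≤ Fup i - F i := le_trans (min_le_left _ _) (min_le_right _ _)
    have hε3 : ε ≤ F i - prevVal n F i := le_trans (min_le_right _ _) (min_le_left _ _)
    have hε4 : ε ≤ F s - F i := le_trans (min_le_right _ _) (min_le_right _ _)
    have hinelast : (i : ℕ) ≠ n := by omega
    set G : Fin (n + 1) → ℝ := Function.update F i (F i + ε) with hGdef
    set H : Fin (n + 1) → ℝ := Function.update F i (F i - ε) with hHdef
    have hGmono : Monotone G := by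
      intro j k hjk
      simp only [hGdef, Function.update_apply]
      split_ifs with hj hk hk
      · exact le_refl _
      · subst hj
        have hik : j < k := lt_of_le_of_ne hjk (fun h => hk h.symm)
        have hsk : s ≤ k := by
          simp only [hs, Fin.le_def]
          have := Fin.lt_def.mp hik
          omega
        have := hFmono hsk
        linarith
      · subst hk
        have := hFmono hjk
        linarith
      · exact hFmono hjk
    have hHmono : Monotone H := by
      intro j k hjk
      simp only [hHdef, Function.update_apply]
      split_ifs with hj hk hk
      · exact le_refl _
      · subst hj
        have := hFmono hjk
        linarith
      · subst hk
        have hjk' : j < k := lt_of_le_of_ne hjk (fun h => hj h)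
        have hk0 : (k : ℕ) ≠ 0 := by
          have := Fin.lt_def.mp hjk'
          omega
        have hprev : prevVal n F k =
            F ⟨(k : ℕ) - 1, Nat.lt_of_le_of_lt (Nat.sub_le _ _) k.isLt⟩ := by
          unfold prevVal; rw [dif_neg hk0]
        have hjp : j ≤ (⟨(k : ℕ) - 1, Nat.lt_of_le_of_lt (Nat.sub_le _ _) k.isLt⟩ : Fin (n+1)) := by
          simp only [Fin.le_def]
          have := Fin.lt_def.mp hjk'
          omega
        have := hFmono hjp
        rw [← hprev] at this
        linarith
      · exact hFmono hjk
    have hilast : i ≠ Fin.last n := by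
      intro h
      exact hinelast (by rw [h]; rfl)
    have hGmem : G ∈ credal n Flow Fup := by
      refine ⟨⟨hGmono, ?_, ?_⟩, ?_, ?_⟩
      · intro j
        simp only [hGdef, Function.update_apply]
        split_ifs with hj
        · subst hj
          constructor
          · linarith [(hFbd j).1]
          · have := (hup.2.1 j).2
            linarith
        · exact hFbd j
      · show Function.update F i (F i + ε) (Fin.last n) = 1
        rw [Function.update_apply, if_neg (fun h => hilast h.symm)]
        exact hFlast
      · intro j
        simp only [hGdef, Function.update_apply]
        split_ifs with hj
        · subst hj; linarith [hlowF j]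
        · exact hlowF j
      · intro j
        simp only [hGdef, Function.update_apply]
        split_ifs with hj
        · subst hj; linarith
        · exact hFup j
    have hHmem : H ∈ credal n Flow Fup := by
      refine ⟨⟨hHmono, ?_, ?_⟩, ?_, ?_⟩
      · intro j
        simp only [hHdef, Function.update_apply]
        split_ifs with hj
        · subst hj
          constructor
          · have := (hlow.2.1 j).1
            linarith
          · linarith [(hFbd j).2]
        · exact hFbd j
      · show Function.update F i (F i - ε) (Fin.last n) = 1
        rw [Function.update_apply, if_neg (fun h => hilast h.symm)]
        exact hFlast
      · intro j
        simp only [hHdef, Function.update_apply]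
        split_ifs with hj
        · subst hj; linarith
        · exact hlowF j
      · intro j
        simp only [hHdef, Function.update_apply]
        split_ifs with hj
        · subst hj; linarith [hFup j]
        · exact hFup j
    have hseg : F ∈ openSegment ℝ G H := by
      refine ⟨1/2, 1/2, by norm_num, by norm_num, by norm_num, ?_⟩
      funext j
      simp only [Pi.add_apply, Pi.smul_apply, smul_eq_mul, hGdef, hHdef,
        Function.update_apply]
      split_ifs with hj
      · subst hj; ring
      · ring
    have := hext hGmem hHmem hseg
    have h' : G i = F i + ε := Function.update_self _ _ _
    rw [this] at h'
    linarith
  · -- i = last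
    right; left
    have hilast : i = Fin.last n := by
      apply Fin.ext
      have := i.isLt
      simp only [Fin.val_last]
      omega
    rw [hilast, hFlast, hup.2.2]
end

section
/- Let Ω = {x_1 < ... < x_n} with n ≥ 2, A_i = {x_1,...,x_i}, and suppose a collection B of subsets of Ω contains A_i, A_j^c and A_k with i < j < k and j > i + 1 (so |A_j ∖ A_i| ≥ 2), together with only singletons and possibly Ω. If B additionally satisfies that A_i ∈ B implies {x_{i+1}} ∉ B and A_j^c ∈ B implies {x_j} ∉ B, then the indicator vectors {1_B : B ∈ B} cannot be completed to n linearly independent vectors using only singletons from A_j ∖ A_i; i.e., B cannot generate a maximal elementary simplicial cone. -/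
/-- The indicator vector of a subset of `Fin n`. -/
noncomputable def ind {n : ℕ} (s : Set (Fin n)) : Fin n → ℝ := Set.indicator s 1

/-- The lower set `A_i = {x_1, ..., x_i}` (here `{x | x ≤ i}` in `Fin n`). -/
def lowSet {n : ℕ} (i : Fin n) : Set (Fin n) := {x | x ≤ i}

/-- Case 2 impossibility: if a collection `𝓑` contains `A_i`, `A_jᶜ` and `A_k` with
`i < j < k` and `|A_j ∖ A_i| ≥ 2`, and otherwise consists only of singletons and
possibly `Ω`, with `{x_{i+1}} ∉ 𝓑` and `{x_j} ∉ 𝓑`, then `𝓑` cannot consist of `n`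
linearly independent indicator vectors, i.e. it cannot generate a maximal elementary
simplicial cone. -/
theorem case_two_not_mesc (n : ℕ) (hn : 2 ≤ n) (i j k : Fin n)
    (hij : (i : ℕ) + 1 < (j : ℕ)) (hjk : j < k)
    (𝓑 : Finset (Set (Fin n)))
    (hAi : lowSet i ∈ 𝓑) (hAj : (lowSet j)ᶜ ∈ 𝓑) (hAk : lowSet k ∈ 𝓑)
    (hform : ∀ s ∈ 𝓑, s = lowSet i ∨ s = (lowSet j)ᶜ ∨ s = lowSet k ∨
      s = Set.univ ∨ ∃ x : Fin n, s = {x})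
    (hs1 : ({(⟨(i : ℕ) + 1, lt_trans hij j.isLt⟩ : Fin n)} : Set (Fin n)) ∉ 𝓑)
    (hs2 : ({j} : Set (Fin n)) ∉ 𝓑) :
    ¬ (𝓑.card = n ∧ LinearIndependent ℝ (fun s : {s // s ∈ 𝓑} => ind s.val)) := by
  rintro ⟨hcard, hli⟩
  set a : Fin n := ⟨(i : ℕ) + 1, lt_trans hij j.isLt⟩ with ha
  have hab : a ≠ j := by
    intro h
    have : (a : ℕ) = (j : ℕ) := by rw [h]
    simp [ha] at this
    omega
  -- key coordinate equality for every generator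
  have hval : ∀ s ∈ 𝓑, ind s a = ind s j := by
    intro s hs
    have haj : (a : ℕ) < (j : ℕ) := by simp [ha]; omega
    rcases hform s hs with h | h | h | h | ⟨x, h⟩ <;> subst h
    · have h1 : a ∉ lowSet i := by
        simp only [lowSet, Set.mem_setOf_eq, Fin.le_def, ha]; omega
      have h2 : j ∉ lowSet i := by
        simp only [lowSet, Set.mem_setOf_eq, Fin.le_def]; omega
      simp [ind, Set.indicator_of_notMem, h1, h2]
    · have h1 : a ∉ (lowSet j)ᶜ := by
        simp only [Set.mem_compl_iff, lowSet, Set.mem_setOf_eq, Fin.le_def, not_not]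
        omega
      have h2 : j ∉ (lowSet j)ᶜ := by
        simp [lowSet, Set.mem_setOf_eq]
      simp [ind, Set.indicator_of_notMem, h1, h2]
    · have h1 : a ∈ lowSet k := by
        simp only [lowSet, Set.mem_setOf_eq, Fin.le_def, ha]
        have := hjk
        rw [Fin.lt_def] at this
        omega
      have h2 : j ∈ lowSet k := le_of_lt hjk
      simp [ind, Set.indicator_of_mem, h1, h2]
    · simp [ind]
    · have hx1 : x ≠ a := by rintro rfl; exact hs1 hs
      have hx2 : x ≠ j := by rintro rfl; exact hs2 hs
      have h1 : a ∉ ({x} : Set (Fin n)) := by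
        simp only [Set.mem_singleton_iff]; exact fun h => hx1 h.symm
      have h2 : j ∉ ({x} : Set (Fin n)) := by
        simp only [Set.mem_singleton_iff]; exact fun h => hx2 h.symm
      simp [ind, Set.indicator_of_notMem, h1, h2]
  -- the linear functional v ↦ v a - v j kills all generators
  let f : (Fin n → ℝ) →ₗ[ℝ] ℝ := (LinearMap.proj a : (Fin n → ℝ) →ₗ[ℝ] ℝ) - (LinearMap.proj j : (Fin n → ℝ) →ₗ[ℝ] ℝ)
  have hker : Set.range (fun s : {s // s ∈ 𝓑} => ind s.val) ⊆ (LinearMap.ker f : Set (Fin n → ℝ)) := by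
    rintro _ ⟨⟨s, hs⟩, rfl⟩
    simp only [SetLike.mem_coe, LinearMap.mem_ker, f, LinearMap.sub_apply, LinearMap.proj_apply]
    have := hval s hs
    simp [this]
  -- but the generators span everything
  have hspan : Submodule.span ℝ (Set.range (fun s : {s // s ∈ 𝓑} => ind s.val)) = ⊤ := by
    have : Nonempty {s // s ∈ 𝓑} := ⟨⟨_, hAi⟩⟩
    apply hli.span_eq_top_of_card_eq_finrank
    simp [Fintype.card_coe, hcard]
  have hftop : (⊤ : Submodule ℝ (Fin n → ℝ)) ≤ LinearMap.ker f := by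
    rw [← hspan]
    exact Submodule.span_le.mpr hker
  have h0 : f (Pi.single a 1) = 0 := hftop (Submodule.mem_top)
  have h1 : f (Pi.single a 1) = 1 := by
    simp [f, Pi.single_apply, hab]
  rw [h0] at h1
  exact zero_ne_one h1
end
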